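/- Let D = ⊕_{j=1}^k λ_j I_{n_j} ∈ Mat_N be a nonzero block-diagonal matrix, where λ₁,…,λ_k are distinct purely imaginary numbers with strictly decreasing imaginary parts and n₁ + ⋯ + n_k = N, and let μ₀ ∈ ℝ∖{0}. Let v = (v₁,…,v_k) and v' = (v'₁,…,v'_k) be nonzero row vectors in ℂ^N partitioned according to the block sizes (v_j, v'_j ∈ ℂ^{n_j}). Consider the condition (ISO): there exist U ∈ GL(N,ℂ), μ ∈ ℝ∖{0} and x ∈ ℂ∖{0} such that μ₀·D = μ·U⁻¹DU and v' = μx·(vU). If D and −D are similar, then (ISO) holds if and only if either (for every j, v_j = 0 ⟺ v'_j = 0) or (for every j, v_j = 0 ⟺ v'_{k+1−j} = 0). If D and −D are not similar, then (ISO) holds if and only if for every j, v_j = 0 ⟺ v'_j = 0. -/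

import Mathlib

open Matrix

/-- The `j`-th block of the row vector `v` (partitioned along the sigma type) vanishes. -/
def BlockZero {k : ℕ} {n : Fin k → ℕ} (v : ((j : Fin k) × Fin (n j)) → ℂ) (j : Fin k) : Prop :=
  ∀ a : Fin (n j), v ⟨j, a⟩ = 0

namespace Stmt7Aux

/-- Any two nonzero vectors of a f.d. vector space are related by a linear automorphism. -/
lemma exists_linearEquiv_map {K V : Type*} [Field K] [AddCommGroup V] [Module K V]
    {w w' : V} (hw : w ≠ 0) (hw' : w' ≠ 0) :
    ∃ f : V ≃ₗ[K] V, f w = w' := by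
  classical
  have h1 : LinearIndepOn K id ({w} : Set V) := LinearIndepOn.singleton hw
  have h2 : LinearIndepOn K id ({w'} : Set V) := LinearIndepOn.singleton hw'
  let b := Module.Basis.extend h1
  let b' := Module.Basis.extend h2
  have hm : w ∈ h1.extend (Set.subset_univ _) := h1.subset_extend _ rfl
  have hm' : w' ∈ h2.extend (Set.subset_univ _) := h2.subset_extend _ rfl
  let i0 : ↥(h1.extend (Set.subset_univ _)) := ⟨w, hm⟩
  let i0' : ↥(h2.extend (Set.subset_univ _)) := ⟨w', hm'⟩
  let e0 := b.indexEquiv b'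
  let e := e0.trans (Equiv.swap (e0 i0) i0')
  refine ⟨b.equiv b' e, ?_⟩
  have hb : b i0 = w := Module.Basis.extend_apply_self h1 i0
  have hb' : b' i0' = w' := Module.Basis.extend_apply_self h2 i0'
  calc (b.equiv b' e) w = (b.equiv b' e) (b i0) := by rw [hb]
    _ = b' (e i0) := b.equiv_apply i0 b' e
    _ = w' := by
        have : e i0 = i0' := by simp [e, Equiv.swap_apply_left]
        rw [this, hb']

/-- The group of invertible matrices acts transitively on nonzero row vectors. -/
lemma vec_trans {m : ℕ} {u w : Fin m → ℂ} (hu : u ≠ 0) (hw : w ≠ 0) :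
    ∃ M : Matrix (Fin m) (Fin m) ℂ, IsUnit M ∧ Matrix.vecMul u M = w := by
  obtain ⟨f, hf⟩ := exists_linearEquiv_map (K := ℂ) hu hw
  refine ⟨(LinearMap.toMatrix' (f : (Fin m → ℂ) →ₗ[ℂ] Fin m → ℂ))ᵀ, ?_, ?_⟩
  · rw [Matrix.isUnit_iff_isUnit_det, Matrix.det_transpose, LinearMap.det_toMatrix']
    exact f.isUnit_det'
  · funext q
    rw [Matrix.vecMul_transpose]
    have h1 : (LinearMap.toMatrix' (f : (Fin m → ℂ) →ₗ[ℂ] Fin m → ℂ)) *ᵥ u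
        = (f : (Fin m → ℂ) →ₗ[ℂ] Fin m → ℂ) u := by
      rw [← Matrix.toLin'_apply, Matrix.toLin'_toMatrix']
    rw [h1]
    simp [hf]

variable {k : ℕ} {n : Fin k → ℕ}

/-- A `vecMul` against a matrix whose column block `j` is supported on row block `j'`. -/
lemma vecMul_block (U : Matrix ((j : Fin k) × Fin (n j)) ((j : Fin k) × Fin (n j)) ℂ)
    {j j' : Fin k}
    (hcol : ∀ p q : (j : Fin k) × Fin (n j), q.1 = j → p.1 ≠ j' → U p q = 0)
    (v : ((j : Fin k) × Fin (n j)) → ℂ) (b : Fin (n j)) :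
    Matrix.vecMul v U ⟨j, b⟩ = ∑ a : Fin (n j'), v ⟨j', a⟩ * U ⟨j', a⟩ ⟨j, b⟩ := by
  simp only [Matrix.vecMul, dotProduct]
  rw [← Finset.univ_sigma_univ, Finset.sum_sigma]
  exact Finset.sum_eq_single_of_mem j' (Finset.mem_univ _)
    (fun i _ hi => Finset.sum_eq_zero fun a _ => by
      rw [hcol ⟨i, a⟩ ⟨j, b⟩ rfl hi, mul_zero])

lemma blockIso {U : Matrix ((j : Fin k) × Fin (n j)) ((j : Fin k) × Fin (n j)) ℂ}
    (hU : IsUnit U) {j j' : Fin k}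
    (hcol : ∀ p q : (j : Fin k) × Fin (n j), q.1 = j → p.1 ≠ j' → U p q = 0)
    (hrow : ∀ p q : (j : Fin k) × Fin (n j), p.1 = j' → q.1 ≠ j → U p q = 0)
    (v : ((j : Fin k) × Fin (n j)) → ℂ) :
    BlockZero (Matrix.vecMul v U) j ↔ BlockZero v j' := by
  constructor
  · intro h
    set vext : ((j : Fin k) × Fin (n j)) → ℂ :=
      fun p => if p.1 = j' then v p else 0 with hvext
    have hz : Matrix.vecMul vext U = Matrix.vecMul 0 U := by
      rw [Matrix.zero_vecMul]
      funext q
      obtain ⟨j1, b⟩ := q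
      show Matrix.vecMul vext U ⟨j1, b⟩ = 0
      by_cases hq : j1 = j
      · subst hq
        rw [vecMul_block U hcol vext b]
        have h2 : Matrix.vecMul v U ⟨j1, b⟩ = 0 := h b
        rw [vecMul_block U hcol v b] at h2
        rw [← h2]
        refine Finset.sum_congr rfl fun a _ => ?_
        simp [hvext]
      · simp only [Matrix.vecMul, dotProduct]
        refine Finset.sum_eq_zero fun p _ => ?_
        by_cases hp : p.1 = j'
        · rw [hrow p ⟨j1, b⟩ hp hq, mul_zero]
        · show (if p.1 = j' then v p else 0) * U p ⟨j1, b⟩ = 0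
          rw [if_neg hp, zero_mul]
    have hinj : Function.Injective U.vecMul := Matrix.vecMul_injective_iff_isUnit.mpr hU
    have h0 : vext = 0 := hinj hz
    intro a
    have := congrFun h0 ⟨j', a⟩
    simpa [hvext] using this
  · intro h b
    rw [vecMul_block U hcol v b]
    exact Finset.sum_eq_zero fun a _ => by rw [h a, zero_mul]

lemma blockZero_smul {c : ℂ} (hc : c ≠ 0) (w : ((j : Fin k) × Fin (n j)) → ℂ) (j : Fin k) :
    BlockZero (c • w) j ↔ BlockZero w j := by
  unfold BlockZero
  constructor <;> intro h a
  · have := h a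
    simp only [Pi.smul_apply, smul_eq_mul, mul_eq_zero] at this
    exact this.resolve_left hc
  · simp [Pi.smul_apply, h a]

lemma diag_conj_support {I : Type*} [Fintype I] [DecidableEq I] (d e : I → ℂ)
    {U : Matrix I I ℂ} (h : Matrix.diagonal d * U = U * Matrix.diagonal e)
    {p q : I} (hpq : d p ≠ e q) : U p q = 0 := by
  have h1 := congrFun (congrFun h p) q
  rw [Matrix.diagonal_mul, Matrix.mul_diagonal] at h1
  have h2 : (d p - e q) * U p q = 0 := by linear_combination h1
  exact (mul_eq_zero.mp h2).resolve_left (sub_ne_zero.mpr hpq)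

lemma support_comm {I : Type*} [Fintype I] [DecidableEq I] {d : I → ℂ}
    {M : Matrix I I ℂ} (h : ∀ p q, d p ≠ d q → M p q = 0) :
    Matrix.diagonal d * M = M * Matrix.diagonal d := by
  ext p q
  rw [Matrix.diagonal_mul, Matrix.mul_diagonal]
  by_cases hd : d p = d q
  · rw [hd, mul_comm]
  · rw [h p q hd, mul_zero, zero_mul]

lemma anti_support (hn : ∀ j, 0 < n j)
    {lam : Fin k → ℂ} (hdec : StrictAnti fun j => (lam j).im)
    {U : Matrix ((j : Fin k) × Fin (n j)) ((j : Fin k) × Fin (n j)) ℂ} (hU : IsUnit U)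
    (hcomm : Matrix.diagonal (fun p : (j : Fin k) × Fin (n j) => lam p.1) * U
      = -(U * Matrix.diagonal (fun p : (j : Fin k) × Fin (n j) => lam p.1))) :
    (∀ j, lam (Fin.rev j) = -lam j) ∧
      (∀ p q : (j : Fin k) × Fin (n j), p.1 ≠ Fin.rev q.1 → U p q = 0) := by
  have hinj : Function.Injective lam := fun i j hij => hdec.injective (by simp [hij])
  have hsupp : ∀ p q : (j : Fin k) × Fin (n j), lam p.1 ≠ -lam q.1 → U p q = 0 := by
    intro p q hpq
    refine diag_conj_support (fun p : (j : Fin k) × Fin (n j) => lam p.1)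
      (fun p : (j : Fin k) × Fin (n j) => -lam p.1) ?_ hpq
    rw [hcomm]
    ext i r
    simp [Matrix.mul_diagonal]
  have hcolnz : ∀ q : (j : Fin k) × Fin (n j), ∃ p, U p q ≠ 0 := by
    intro q
    by_contra hc
    push_neg at hc
    have h1 : U *ᵥ Pi.single q 1 = U *ᵥ 0 := by
      rw [Matrix.mulVec_zero]
      funext p
      rw [Matrix.mulVec_single]
      simp [hc p]
    have hinj2 : Function.Injective U.mulVec := Matrix.mulVec_injective_iff_isUnit.mpr hU
    have h2 := hinj2 h1
    simpa using congrFun h2 q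
  have hex : ∀ j : Fin k, ∃ j', lam j' = -lam j := by
    intro j
    obtain ⟨p, hp⟩ := hcolnz ⟨j, ⟨0, hn j⟩⟩
    exact ⟨p.1, by by_contra hne; exact hp (hsupp _ _ hne)⟩
  choose σ hσ using hex
  have hanti : StrictAnti σ := by
    intro i j hij
    have h1 : (lam (σ i)).im < (lam (σ j)).im := by
      rw [hσ i, hσ j]
      simp only [Complex.neg_im]
      exact neg_lt_neg (hdec hij)
    rcases lt_trichotomy (σ j) (σ i) with h | h | h
    · exact h
    · exact absurd h1 (by rw [h]; exact lt_irrefl _)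
    · exact absurd h1 (not_lt.mpr (le_of_lt (hdec h)))
  have hbij : Function.Bijective σ := Finite.injective_iff_bijective.mp hanti.injective
  have hmono : StrictMono (σ ∘ Fin.rev) := fun a b hab => hanti (Fin.rev_lt_rev.mpr hab)
  have hsurj : Function.Surjective (σ ∘ Fin.rev) := hbij.surjective.comp Fin.rev_surjective
  have hid : ∀ j, σ (Fin.rev j) = j := by
    intro j
    have h2 := Fin.coe_orderIso_apply (StrictMono.orderIsoOfSurjective _ hmono hsurj) j
    rw [show ((StrictMono.orderIsoOfSurjective _ hmono hsurj) j : Fin k) = σ (Fin.rev j) from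
      congrFun (StrictMono.coe_orderIsoOfSurjective _ _ _) j] at h2
    exact Fin.ext h2
  have hrev : ∀ j, σ j = Fin.rev j := by
    intro j
    have := hid (Fin.rev j)
    rwa [Fin.rev_rev] at this
  refine ⟨fun j => by rw [← hrev j, hσ j], fun p q hpq => hsupp p q fun hc => hpq ?_⟩
  have hlc : lam p.1 = lam (Fin.rev q.1) := by rw [hc, ← hσ q.1, hrev]
  exact hinj hlc

lemma construct {u w : ((j : Fin k) × Fin (n j)) → ℂ}
    (hpat : ∀ j, BlockZero u j ↔ BlockZero w j) :
    ∃ M : Matrix ((j : Fin k) × Fin (n j)) ((j : Fin k) × Fin (n j)) ℂ,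
      IsUnit M ∧ (∀ p q : (j : Fin k) × Fin (n j), p.1 ≠ q.1 → M p q = 0) ∧
        Matrix.vecMul u M = w := by
  have hW : ∀ j : Fin k, ∃ W : Matrix (Fin (n j)) (Fin (n j)) ℂ,
      IsUnit W ∧ Matrix.vecMul (fun a => u ⟨j, a⟩) W = fun a => w ⟨j, a⟩ := by
    intro j
    by_cases h : (fun a => u ⟨j, a⟩) = (0 : Fin (n j) → ℂ)
    · refine ⟨1, isUnit_one, ?_⟩
      have hw0 : (fun a => w ⟨j, a⟩) = (0 : Fin (n j) → ℂ) :=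
        funext fun a => (hpat j).mp (fun b => congrFun h b) a
      rw [Matrix.vecMul_one, h, hw0]
    · have hwne : (fun a => w ⟨j, a⟩) ≠ (0 : Fin (n j) → ℂ) := by
        intro hw0
        exact h (funext fun a => (hpat j).mpr (fun b => congrFun hw0 b) a)
      exact vec_trans h hwne
  choose W hWu hWe using hW
  have hsupp : ∀ p q : (j : Fin k) × Fin (n j), p.1 ≠ q.1 → Matrix.blockDiagonal' W p q = 0 := by
    intro ⟨i, a⟩ ⟨j, b⟩ hpq
    exact Matrix.blockDiagonal'_apply_ne W a b hpq
  refine ⟨Matrix.blockDiagonal' W, ?_, hsupp, ?_⟩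
  · have key : ∀ X Y : (j : Fin k) → Matrix (Fin (n j)) (Fin (n j)) ℂ,
        (∀ j, X j * Y j = 1) → Matrix.blockDiagonal' X * Matrix.blockDiagonal' Y = 1 := by
      intro X Y hXY
      rw [← Matrix.blockDiagonal'_mul,
        show (fun j => X j * Y j) = (1 : ∀ j : Fin k, Matrix (Fin (n j)) (Fin (n j)) ℂ) from
          funext hXY, Matrix.blockDiagonal'_one]
    have hdet : ∀ j, IsUnit (W j).det := fun j => (Matrix.isUnit_iff_isUnit_det _).mp (hWu j)
    exact ⟨⟨Matrix.blockDiagonal' W, Matrix.blockDiagonal' (fun j => (W j)⁻¹),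
      key _ _ (fun j => Matrix.mul_nonsing_inv _ (hdet j)),
      key _ _ (fun j => Matrix.nonsing_inv_mul _ (hdet j))⟩, rfl⟩
  · funext q
    obtain ⟨j, b⟩ := q
    rw [vecMul_block (Matrix.blockDiagonal' W)
      (fun p q hq hp => hsupp p q (by rw [hq]; exact hp)) u b]
    have h1 := congrFun (hWe j) b
    simp only [Matrix.vecMul, dotProduct] at h1
    rw [← h1]
    refine Finset.sum_congr rfl fun a _ => ?_
    rw [Matrix.blockDiagonal'_apply_eq]

end Stmt7Aux

open Stmt7Aux in
/-- For `D = ⊕ⱼ λⱼ I_{nⱼ}` with distinct purely imaginary eigenvalues of strictly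
decreasing imaginary parts and nonzero row vectors `v, v'`, the condition (ISO) — existence of
`U ∈ GL(N,ℂ)`, `μ ∈ ℝ∖{0}`, `x ∈ ℂ∖{0}` with `μ₀ D = μ U⁻¹ D U` and `v' = μ x (v U)` — holds
iff the zero-block patterns of `v` and `v'` agree (up to reversal when `D` and `-D` are
similar). -/
theorem stmt7 {k : ℕ} (n : Fin k → ℕ) (hn : ∀ j, 0 < n j)
    (lam : Fin k → ℂ) (hre : ∀ j, (lam j).re = 0)
    (hdec : StrictAnti fun j => (lam j).im)
    (D : Matrix ((j : Fin k) × Fin (n j)) ((j : Fin k) × Fin (n j)) ℂ)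
    (hD : D = Matrix.diagonal fun p => lam p.1)
    (hD0 : D ≠ 0)
    (μ₀ : ℝ) (hμ₀ : μ₀ ≠ 0)
    (v v' : ((j : Fin k) × Fin (n j)) → ℂ) (hv : v ≠ 0) (hv' : v' ≠ 0) :
    ((∃ S : GL ((j : Fin k) × Fin (n j)) ℂ, -D = (S⁻¹).val * D * S.val) →
      ((∃ (U : GL ((j : Fin k) × Fin (n j)) ℂ) (μ : ℝ) (x : ℂ), μ ≠ 0 ∧ x ≠ 0 ∧
          (μ₀ : ℂ) • D = (μ : ℂ) • ((U⁻¹).val * D * U.val) ∧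
          v' = ((μ : ℂ) * x) • Matrix.vecMul v U.val) ↔
        ((∀ j, BlockZero v j ↔ BlockZero v' j) ∨
         (∀ j, BlockZero v j ↔ BlockZero v' j.rev)))) ∧
    (¬ (∃ S : GL ((j : Fin k) × Fin (n j)) ℂ, -D = (S⁻¹).val * D * S.val) →
      ((∃ (U : GL ((j : Fin k) × Fin (n j)) ℂ) (μ : ℝ) (x : ℂ), μ ≠ 0 ∧ x ≠ 0 ∧
          (μ₀ : ℂ) • D = (μ : ℂ) • ((U⁻¹).val * D * U.val) ∧
          v' = ((μ : ℂ) * x) • Matrix.vecMul v U.val) ↔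
        (∀ j, BlockZero v j ↔ BlockZero v' j))) := by
  subst hD
  set d : ((j : Fin k) × Fin (n j)) → ℂ := fun p => lam p.1 with hd
  have hμ₀C : (μ₀ : ℂ) ≠ 0 := Complex.ofReal_ne_zero.mpr hμ₀
  have hinj : Function.Injective lam := fun i j hij => hdec.injective (by simp [hij])
  -- trace of D² is nonzero
  have hex0 : ∃ p : (j : Fin k) × Fin (n j), lam p.1 ≠ 0 := by
    by_contra hc
    push_neg at hc
    exact hD0 (by ext p q; simp [Matrix.diagonal_apply, hd, hc])
  have htr : Matrix.trace (Matrix.diagonal d * Matrix.diagonal d) ≠ 0 := by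
    rw [Matrix.diagonal_mul_diagonal, Matrix.trace_diagonal]
    intro hsum
    have hre2 := congrArg Complex.re hsum
    rw [Complex.re_sum, Complex.zero_re] at hre2
    have h1 : ∀ p : (j : Fin k) × Fin (n j), (d p * d p).re = -((lam p.1).im ^ 2) := by
      intro p
      rw [hd]
      simp only [Complex.mul_re, hre p.1]
      ring
    rw [Finset.sum_congr rfl (fun p _ => h1 p), Finset.sum_neg_distrib, neg_eq_zero] at hre2
    obtain ⟨p0, hp0⟩ := hex0
    have him : (lam p0.1).im ≠ 0 := by
      intro h0
      exact hp0 (Complex.ext (hre p0.1) h0)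
    have hposs : 0 < ∑ p : (j : Fin k) × Fin (n j), ((lam p.1).im) ^ 2 :=
      Finset.sum_pos' (fun _ _ => sq_nonneg _) ⟨p0, Finset.mem_univ _, by positivity⟩
    exact hposs.ne' hre2
  -- the forward direction
  have forward : (∃ (U : GL ((j : Fin k) × Fin (n j)) ℂ) (μ : ℝ) (x : ℂ), μ ≠ 0 ∧ x ≠ 0 ∧
      (μ₀ : ℂ) • Matrix.diagonal d = (μ : ℂ) • ((U⁻¹).val * Matrix.diagonal d * U.val) ∧
      v' = ((μ : ℂ) * x) • Matrix.vecMul v U.val) →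
      ((∀ j, BlockZero v j ↔ BlockZero v' j) ∨
        ((∃ S : GL ((j : Fin k) × Fin (n j)) ℂ,
            -Matrix.diagonal d = (S⁻¹).val * Matrix.diagonal d * S.val) ∧
          (∀ j, BlockZero v j ↔ BlockZero v' j.rev))) := by
    intro ⟨U, μ, x, hμ, hx, hEq, hveq⟩
    have hμx : (μ : ℂ) * x ≠ 0 := mul_ne_zero (Complex.ofReal_ne_zero.mpr hμ) hx
    set A : Matrix ((j : Fin k) × Fin (n j)) ((j : Fin k) × Fin (n j)) ℂ := (U⁻¹).val with hA
    set B : Matrix ((j : Fin k) × Fin (n j)) ((j : Fin k) × Fin (n j)) ℂ := U.val with hB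
    have hBA : B * A = 1 := U.mul_inv
    have hAB : A * B = 1 := U.inv_mul
    have hUisUnit : IsUnit B := ⟨U, rfl⟩
    -- μ = ±μ₀ via traces
    have hcases : μ = μ₀ ∨ μ = -μ₀ := by
      have h1 := congrArg (fun M => Matrix.trace (M * M)) hEq
      simp only [Matrix.smul_mul, Matrix.mul_smul, Matrix.trace_smul, smul_eq_mul,
        smul_smul] at h1
      have h2 : A * Matrix.diagonal d * B * (A * Matrix.diagonal d * B)
          = A * (Matrix.diagonal d * Matrix.diagonal d) * B := by
        calc A * Matrix.diagonal d * B * (A * Matrix.diagonal d * B)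
            = A * Matrix.diagonal d * (B * A) * Matrix.diagonal d * B := by
              simp only [Matrix.mul_assoc]
          _ = A * (Matrix.diagonal d * Matrix.diagonal d) * B := by
              rw [hBA, Matrix.mul_one]; simp only [Matrix.mul_assoc]
      rw [h2] at h1
      have h3 : Matrix.trace (A * (Matrix.diagonal d * Matrix.diagonal d) * B)
          = Matrix.trace (Matrix.diagonal d * Matrix.diagonal d) :=
        Matrix.trace_units_conj' U _
      rw [h3] at h1
      have h4 : (((μ:ℂ) - μ₀) * ((μ:ℂ) + μ₀)) * Matrix.trace (Matrix.diagonal d * Matrix.diagonal d) = 0 := by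
        linear_combination -h1
      rcases mul_eq_zero.mp h4 with h5 | h5
      · rcases mul_eq_zero.mp h5 with h6 | h6
        · left; exact_mod_cast sub_eq_zero.mp h6
        · right
          have := eq_neg_of_add_eq_zero_left h6
          exact_mod_cast this
      · exact absurd h5 htr
    rcases hcases with hcase | hcase
    · -- μ = μ₀ : block-diagonal case
      left
      subst hcase
      have hDeq : Matrix.diagonal d = A * Matrix.diagonal d * B := by
        have := smul_right_injective
          (Matrix ((j : Fin k) × Fin (n j)) ((j : Fin k) × Fin (n j)) ℂ) hμ₀C hEq
        exact this
      have hcomm : Matrix.diagonal d * B = B * Matrix.diagonal d := by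
        conv_rhs => rw [hDeq]
        calc Matrix.diagonal d * B = (B * A) * Matrix.diagonal d * B := by
              rw [hBA, Matrix.one_mul]
          _ = B * (A * Matrix.diagonal d * B) := by simp only [Matrix.mul_assoc]
      have hsupp : ∀ p q : (j : Fin k) × Fin (n j), p.1 ≠ q.1 → B p q = 0 :=
        fun p q hpq => diag_conj_support d d hcomm fun hlam => hpq (hinj hlam)
      intro j
      have h1 : BlockZero (Matrix.vecMul v B) j ↔ BlockZero v j :=
        blockIso hUisUnit
          (fun p q hq hp => hsupp p q (by rw [hq]; exact hp))
          (fun p q hp hq => hsupp p q (by rw [hp]; exact fun hc => hq hc.symm)) v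
      have h2 : BlockZero v' j ↔ BlockZero (Matrix.vecMul v B) j := by
        rw [hveq]
        exact blockZero_smul hμx _ j
      exact h1.symm.trans h2.symm
    · -- μ = -μ₀ : anti-diagonal case
      right
      subst hcase
      have hDeq : -Matrix.diagonal d = A * Matrix.diagonal d * B := by
        have h0 : (μ₀ : ℂ) • Matrix.diagonal d
            = (μ₀ : ℂ) • -(A * Matrix.diagonal d * B) := by
          rw [hEq, Complex.ofReal_neg, neg_smul, ← smul_neg]
        have h1 := smul_right_injective
          (Matrix ((j : Fin k) × Fin (n j)) ((j : Fin k) × Fin (n j)) ℂ) hμ₀C h0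
        exact neg_eq_iff_eq_neg.mpr h1
      have hanti : Matrix.diagonal d * B = -(B * Matrix.diagonal d) := by
        have h1 : B * -Matrix.diagonal d = Matrix.diagonal d * B := by
          rw [hDeq]
          calc B * (A * Matrix.diagonal d * B)
              = (B * A) * Matrix.diagonal d * B := by simp only [Matrix.mul_assoc]
            _ = Matrix.diagonal d * B := by rw [hBA, Matrix.one_mul]
        rw [← h1, Matrix.mul_neg]
      obtain ⟨hrevlam, hsupp⟩ := anti_support hn hdec hUisUnit hanti
      refine ⟨⟨U, by rw [← hA, ← hB]; exact hDeq⟩, fun j => ?_⟩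
      have h1 : BlockZero (Matrix.vecMul v B) (Fin.rev j) ↔ BlockZero v j :=
        blockIso hUisUnit
          (fun p q hq hp => hsupp p q (by rw [hq, Fin.rev_rev]; exact hp))
          (fun p q hp hq => hsupp p q
            (by rw [hp]; intro hc; exact hq (by rw [hc, Fin.rev_rev]))) v
      have h2 : BlockZero v' (Fin.rev j) ↔ BlockZero (Matrix.vecMul v B) (Fin.rev j) := by
        rw [hveq]
        exact blockZero_smul hμx _ _
      exact h1.symm.trans h2.symm
  -- construction with equal block patterns
  have back_eq : (∀ j, BlockZero v j ↔ BlockZero v' j) →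
      (∃ (U : GL ((j : Fin k) × Fin (n j)) ℂ) (μ : ℝ) (x : ℂ), μ ≠ 0 ∧ x ≠ 0 ∧
        (μ₀ : ℂ) • Matrix.diagonal d = (μ : ℂ) • ((U⁻¹).val * Matrix.diagonal d * U.val) ∧
        v' = ((μ : ℂ) * x) • Matrix.vecMul v U.val) := by
    intro hpat
    obtain ⟨M, hMu, hMs, hMe⟩ := construct hpat
    obtain ⟨Mu, hMuEq⟩ := hMu
    have hcomm : Matrix.diagonal d * M = M * Matrix.diagonal d :=
      support_comm fun p q hdpq => hMs p q fun he => hdpq (show lam p.1 = lam q.1 by rw [he])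
    refine ⟨Mu, μ₀, (μ₀ : ℂ)⁻¹, hμ₀, inv_ne_zero hμ₀C, ?_, ?_⟩
    · have h1 : (Mu⁻¹).val * (Matrix.diagonal d * Mu.val) = Matrix.diagonal d := by
        rw [hMuEq, hcomm, ← Matrix.mul_assoc, ← hMuEq, Mu.inv_mul, Matrix.one_mul]
      rw [Matrix.mul_assoc, h1]
    · rw [hMuEq, mul_inv_cancel₀ hμ₀C, one_smul, hMe]
  -- construction with reversed block patterns (given the similarity witness)
  have back_rev : (∃ S : GL ((j : Fin k) × Fin (n j)) ℂ,
        -Matrix.diagonal d = (S⁻¹).val * Matrix.diagonal d * S.val) →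
      (∀ j, BlockZero v j ↔ BlockZero v' j.rev) →
      (∃ (U : GL ((j : Fin k) × Fin (n j)) ℂ) (μ : ℝ) (x : ℂ), μ ≠ 0 ∧ x ≠ 0 ∧
        (μ₀ : ℂ) • Matrix.diagonal d = (μ : ℂ) • ((U⁻¹).val * Matrix.diagonal d * U.val) ∧
        v' = ((μ : ℂ) * x) • Matrix.vecMul v U.val) := by
    intro ⟨S, hS⟩ hpat
    have hSBA : S.val * (S⁻¹).val = 1 := S.mul_inv
    have hanti : Matrix.diagonal d * S.val = -(S.val * Matrix.diagonal d) := by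
      have h1 : S.val * -Matrix.diagonal d = Matrix.diagonal d * S.val := by
        rw [hS]
        calc S.val * ((S⁻¹).val * Matrix.diagonal d * S.val)
            = (S.val * (S⁻¹).val) * Matrix.diagonal d * S.val := by simp only [Matrix.mul_assoc]
          _ = Matrix.diagonal d * S.val := by rw [hSBA, Matrix.one_mul]
      rw [← h1, Matrix.mul_neg]
    obtain ⟨hrevlam, hsupp⟩ := anti_support hn hdec ⟨S, rfl⟩ hanti
    set u : ((j : Fin k) × Fin (n j)) → ℂ := Matrix.vecMul v S.val with hu
    have hupat : ∀ j, BlockZero u j ↔ BlockZero v' j := by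
      intro j
      have h1 : BlockZero u j ↔ BlockZero v (Fin.rev j) :=
        blockIso ⟨S, rfl⟩
          (fun p q hq hp => hsupp p q (by rw [hq]; exact hp))
          (fun p q hp hq => hsupp p q
            (by rw [hp]; intro hc; exact hq (Fin.rev_inj.mp hc).symm)) v
      exact h1.trans ((hpat (Fin.rev j)).trans (by rw [Fin.rev_rev]))
    obtain ⟨M, hMu, hMs, hMe⟩ := construct hupat
    obtain ⟨Mu, hMuEq⟩ := hMu
    have hcomm : Matrix.diagonal d * M = M * Matrix.diagonal d :=
      support_comm fun p q hdpq => hMs p q fun he => hdpq (show lam p.1 = lam q.1 by rw [he])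
    refine ⟨S * Mu, -μ₀, -(μ₀ : ℂ)⁻¹, neg_ne_zero.mpr hμ₀,
      neg_ne_zero.mpr (inv_ne_zero hμ₀C), ?_, ?_⟩
    · have hval : ((S * Mu)⁻¹).val = (Mu⁻¹).val * (S⁻¹).val := by rw [_root_.mul_inv_rev]; rfl
      have hval2 : (S * Mu).val = S.val * Mu.val := rfl
      have hconj : ((S * Mu)⁻¹).val * Matrix.diagonal d * (S * Mu).val
          = -Matrix.diagonal d := by
        rw [hval, hval2, hMuEq]
        calc (Mu⁻¹).val * (S⁻¹).val * Matrix.diagonal d * (S.val * M)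
            = (Mu⁻¹).val * ((S⁻¹).val * Matrix.diagonal d * S.val) * M := by
              simp only [Matrix.mul_assoc]
          _ = (Mu⁻¹).val * -Matrix.diagonal d * M := by rw [← hS]
          _ = -((Mu⁻¹).val * (Matrix.diagonal d * M)) := by
              simp only [Matrix.mul_neg, Matrix.neg_mul, Matrix.mul_assoc]
          _ = -((Mu⁻¹).val * (M * Matrix.diagonal d)) := by rw [hcomm]
          _ = -(((Mu⁻¹).val * M) * Matrix.diagonal d) := by rw [Matrix.mul_assoc]
          _ = -Matrix.diagonal d := by rw [← hMuEq, Mu.inv_mul, Matrix.one_mul]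
      rw [hconj, Complex.ofReal_neg, neg_smul, smul_neg, neg_neg]
    · have hone : ((-μ₀ : ℝ) : ℂ) * -(μ₀ : ℂ)⁻¹ = 1 := by
        push_cast
        field_simp
      rw [hone, one_smul, show (S * Mu).val = S.val * M by rw [← hMuEq]; rfl,
        ← Matrix.vecMul_vecMul, ← hu, hMe]
  refine ⟨fun hsim => ⟨fun hiso => ?_, fun hpat => ?_⟩,
    fun hnsim => ⟨fun hiso => ?_, fun hpat => ?_⟩⟩
  · rcases forward hiso with h | ⟨_, h⟩
    · exact Or.inl h
    · exact Or.inr h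
  · rcases hpat with h | h
    · exact back_eq h
    · exact back_rev hsim h
  · rcases forward hiso with h | ⟨hsim2, _⟩
    · exact h
    · exact absurd hsim2 hnsim
  · exact back_eq hpat
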